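/- There is no ε-additive perturbation stable 2-means instance with ε > 1/2 in which both clusters contain at least 4 points. -/

import Mathlib

open RealInnerProductSpace Finset

open Classical in
/-- The mean of cluster `j` in the clustering `c` of the points `x`. -/
noncomputable def clusterMean {d n k : ℕ} (x : Fin n → EuclideanSpace ℝ (Fin d))
    (c : Fin n → Fin k) (j : Fin k) : EuclideanSpace ℝ (Fin d) :=
  (((Finset.univ.filter (fun i => c i = j)).card : ℝ))⁻¹ •
    ∑ i ∈ Finset.univ.filter (fun i => c i = j), x i

/-- The `k`-means cost of the clustering `c` of the points `x` (each cluster with its mean). -/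
noncomputable def kmeansCost {d n k : ℕ} (x : Fin n → EuclideanSpace ℝ (Fin d))
    (c : Fin n → Fin k) : ℝ :=
  ∑ i, ‖x i - clusterMean x c (c i)‖ ^ 2

/-- `c` is an optimal `k`-means clustering of `x`. -/
def IsOptimalClustering {d n k : ℕ} (x : Fin n → EuclideanSpace ℝ (Fin d))
    (c : Fin n → Fin k) : Prop :=
  ∀ c' : Fin n → Fin k, kmeansCost x c ≤ kmeansCost x c'

/-- `c` is the unique optimal clustering of `x` (up to relabeling of clusters). -/
def IsUniqueOptimalClustering {d n k : ℕ} (x : Fin n → EuclideanSpace ℝ (Fin d))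
    (c : Fin n → Fin k) : Prop :=
  IsOptimalClustering x c ∧
    ∀ c' : Fin n → Fin k, IsOptimalClustering x c' → ∀ i j, (c' i = c' j ↔ c i = c j)

/-- `x` with optimal clustering `c` is `ε`-additive perturbation stable with scale `D`:
after moving every point a distance at most `ε·D`, `c` remains an optimal clustering. -/
def IsAPS {d n k : ℕ} (ε D : ℝ) (x : Fin n → EuclideanSpace ℝ (Fin d))
    (c : Fin n → Fin k) : Prop :=
  ∀ x' : Fin n → EuclideanSpace ℝ (Fin d),
    (∀ i, ‖x' i - x i‖ ≤ ε * D) → IsOptimalClustering x' c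





lemma sum_sq_mean_le {d n : ℕ} (y : Fin n → EuclideanSpace ℝ (Fin d)) (S : Finset (Fin n))
    (z : EuclideanSpace ℝ (Fin d)) :
    ∑ i ∈ S, ‖y i - ((S.card : ℝ))⁻¹ • ∑ j ∈ S, y j‖ ^ 2 ≤ ∑ i ∈ S, ‖y i - z‖ ^ 2 := by
  rcases S.eq_empty_or_nonempty with rfl | hS
  · simp
  set μ : EuclideanSpace ℝ (Fin d) := ((S.card : ℝ))⁻¹ • ∑ j ∈ S, y j with hμ
  have hcard : (S.card : ℝ) ≠ 0 := Nat.cast_ne_zero.mpr hS.card_ne_zero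
  have hzero : ∑ i ∈ S, (y i - μ) = 0 := by
    rw [Finset.sum_sub_distrib, Finset.sum_const, hμ, ← Nat.cast_smul_eq_nsmul ℝ, smul_smul,
      mul_inv_cancel₀ hcard, one_smul, sub_self]
  have hkey : ∑ i ∈ S, ‖y i - z‖ ^ 2
      = ∑ i ∈ S, ‖y i - μ‖ ^ 2 + (2 * ⟪∑ i ∈ S, (y i - μ), μ - z⟫ + S.card * ‖μ - z‖ ^ 2) := by
    have h1 : ∀ i ∈ S, ‖y i - z‖ ^ 2
        = ‖y i - μ‖ ^ 2 + (2 * ⟪y i - μ, μ - z⟫ + ‖μ - z‖ ^ 2) := by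
      intro i _
      have h2 : y i - z = (y i - μ) + (μ - z) := by abel
      rw [h2, norm_add_sq_real]; ring
    rw [Finset.sum_congr rfl h1, Finset.sum_add_distrib, Finset.sum_add_distrib, sum_inner,
      Finset.mul_sum, Finset.sum_const, nsmul_eq_mul]
  rw [hkey, hzero]
  have : (0:ℝ) ≤ (S.card : ℝ) * ‖μ - z‖ ^ 2 := by positivity
  simp only [inner_zero_left, mul_zero, zero_add]
  linarith

open Classical in
lemma kmeansCost_le_centers {d n k : ℕ} (y : Fin n → EuclideanSpace ℝ (Fin d))
    (c : Fin n → Fin k) (z : Fin k → EuclideanSpace ℝ (Fin d)) :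
    kmeansCost y c ≤ ∑ i, ‖y i - z (c i)‖ ^ 2 := by
  unfold kmeansCost
  rw [← Finset.sum_fiberwise Finset.univ c (fun i => ‖y i - clusterMean y c (c i)‖ ^ 2),
    ← Finset.sum_fiberwise Finset.univ c (fun i => ‖y i - z (c i)‖ ^ 2)]
  apply Finset.sum_le_sum
  intro j _
  have h1 : ∀ i ∈ Finset.univ.filter (fun i => c i = j),
      ‖y i - clusterMean y c (c i)‖ ^ 2 = ‖y i - clusterMean y c j‖ ^ 2 := by
    intro i hi
    rw [(Finset.mem_filter.mp hi).2]
  have h2 : ∀ i ∈ Finset.univ.filter (fun i => c i = j),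
      ‖y i - z (c i)‖ ^ 2 = ‖y i - z j‖ ^ 2 := by
    intro i hi
    rw [(Finset.mem_filter.mp hi).2]
  rw [Finset.sum_congr rfl h1, Finset.sum_congr rfl h2]
  exact sum_sq_mean_le y _ (z j)


set_option maxHeartbeats 1000000 in
open Classical in
/-- There is no `ε`-additive perturbation stable 2-means instance with `ε > 1/2`
in which both clusters contain at least 4 points. -/
theorem no_aps_instance_of_large_epsilon {d n : ℕ} (ε : ℝ) (hε : 1 / 2 < ε)
    (x : Fin n → EuclideanSpace ℝ (Fin d)) (c : Fin n → Fin 2)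
    (hsize : ∀ j : Fin 2, 4 ≤ (Finset.univ.filter (fun i => c i = j)).card)
    (hopt : IsUniqueOptimalClustering x c)
    (haps : IsAPS ε ‖clusterMean x c 0 - clusterMean x c 1‖ x c) :
    False := by
  by_cases hD : clusterMean x c 0 = clusterMean x c 1
  · -- equal means: every clustering is optimal, contradicting uniqueness
    have hc0 : IsOptimalClustering x (fun _ => (0 : Fin 2)) := by
      intro c''
      have h1 := kmeansCost_le_centers x (fun _ => (0 : Fin 2))
        (fun _ => clusterMean x c 0)
      have h2 : ∑ i, ‖x i - clusterMean x c 0‖ ^ 2 = kmeansCost x c := by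
        unfold kmeansCost
        refine Finset.sum_congr rfl fun i _ => ?_
        have h3 : c i = 0 ∨ c i = 1 := by omega
        rcases h3 with h3 | h3 <;> rw [h3]
        rw [hD]
      calc kmeansCost x (fun _ => (0 : Fin 2)) ≤ ∑ i, ‖x i - clusterMean x c 0‖ ^ 2 := h1
        _ = kmeansCost x c := h2
        _ ≤ kmeansCost x c'' := hopt.1 c''
    have hiff := hopt.2 _ hc0
    obtain ⟨i₀, hi₀⟩ := Finset.card_pos.mp (lt_of_lt_of_le (by norm_num) (hsize 0))
    obtain ⟨i₁, hi₁⟩ := Finset.card_pos.mp (lt_of_lt_of_le (by norm_num) (hsize 1))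
    have e0 : c i₀ = 0 := (Finset.mem_filter.mp hi₀).2
    have e1 : c i₁ = 1 := (Finset.mem_filter.mp hi₁).2
    have := (hiff i₀ i₁).mp rfl
    rw [e0, e1] at this
    exact absurd this (by decide)
  · -- distinct means case
    -- distinct means
    set μ₀ := clusterMean x c 0 with hμ₀
    set μ₁ := clusterMean x c 1 with hμ₁
    set D : ℝ := ‖μ₀ - μ₁‖ with hDdef
    have hDpos : 0 < D := norm_sub_pos_iff.mpr hD
    have hε0 : (0:ℝ) < ε := lt_trans (by norm_num) hε
    set u : EuclideanSpace ℝ (Fin d) := D⁻¹ • (μ₁ - μ₀) with hu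
    have hDu : μ₁ - μ₀ = D • u := by
      rw [hu, smul_smul, mul_inv_cancel₀ hDpos.ne', one_smul]
    have hu_norm : ‖u‖ = 1 := by
      rw [hu, norm_smul, norm_sub_rev, Real.norm_eq_abs, abs_of_pos (inv_pos.mpr hDpos),
        ← hDdef, inv_mul_cancel₀ hDpos.ne']
    have hinner_u : ⟪u, μ₁ - μ₀⟫ = D := by
      rw [hDu, real_inner_smul_right, real_inner_self_eq_norm_sq, hu_norm]
      simp
    clear hu
    clear_value u
    set S₀ := Finset.univ.filter (fun i => c i = (0 : Fin 2)) with hS₀def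
    have hm : 4 ≤ S₀.card := hsize 0
    have hS₀ne : S₀.Nonempty := Finset.card_pos.mp (by omega)
    have hcard0 : (S₀.card : ℝ) ≠ 0 := Nat.cast_ne_zero.mpr hS₀ne.card_ne_zero
    -- choose a point a of cluster 0 with ⟪u, x a⟫ at least the average
    have hmean_sum : (S₀.card : ℝ) • μ₀ = ∑ i ∈ S₀, x i := by
      rw [hμ₀]; unfold clusterMean
      rw [smul_smul, mul_inv_cancel₀ hcard0, one_smul]
    have hsum : ∑ i ∈ S₀, ⟪u, μ₀⟫ ≤ ∑ i ∈ S₀, ⟪u, x i⟫ := le_of_eq (by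
      calc ∑ i ∈ S₀, ⟪u, μ₀⟫ = ⟪u, ((S₀.card : ℝ)) • μ₀⟫ := by
            rw [real_inner_smul_right, Finset.sum_const, nsmul_eq_mul]
        _ = ⟪u, ∑ i ∈ S₀, x i⟫ := by rw [hmean_sum]
        _ = ∑ i ∈ S₀, ⟪u, x i⟫ := inner_sum _ _ _)
    obtain ⟨a, ha, hale⟩ := Finset.exists_le_of_sum_le hS₀ne hsum
    have hca : c a = 0 := (Finset.mem_filter.mp ha).2
    -- three compensating points
    have h3 : 3 ≤ (S₀.erase a).card := by rw [Finset.card_erase_of_mem ha]; omega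
    obtain ⟨T, hTsub, hTcard⟩ := Finset.exists_subset_card_eq h3
    have haT : a ∉ T := fun h => (Finset.mem_erase.mp (hTsub h)).1 rfl
    -- the perturbation
    set g : Fin n → EuclideanSpace ℝ (Fin d) :=
      fun i => if i = a then (ε * D) • u else if i ∈ T then (-(ε * D / 3)) • u else 0 with hg
    set x' : Fin n → EuclideanSpace ℝ (Fin d) := fun i => x i + g i with hx'
    have hmove : ∀ i, ‖x' i - x i‖ ≤ ε * D := by
      intro i
      rw [hx']
      simp only [add_sub_cancel_left, hg]
      split_ifs with h1 h2
      · rw [norm_smul, hu_norm, mul_one, Real.norm_eq_abs, abs_of_nonneg (by positivity)]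
      · rw [norm_smul, hu_norm, mul_one, Real.norm_eq_abs, abs_neg,
          abs_of_nonneg (by positivity)]
        nlinarith
      · simpa using by positivity
    have hgsum : ∑ i ∈ S₀, g i = 0 := by
      rw [← Finset.sum_erase_add S₀ g ha]
      have h1 : ∑ i ∈ S₀.erase a, g i = ∑ i ∈ T, (-(ε * D / 3)) • u := by
        rw [Finset.sum_congr rfl (fun i hi => ?_), Finset.sum_ite_mem,
          Finset.inter_eq_right.mpr hTsub]
        rw [hg]
        simp only [(Finset.mem_erase.mp hi).1, if_false]
      have h2 : g a = (ε * D) • u := by rw [hg]; simp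
      rw [h1, Finset.sum_const, hTcard, h2, ← Nat.cast_smul_eq_nsmul ℝ, smul_smul, ← add_smul]
      have h4 : ((3 : ℕ) : ℝ) * -(ε * D / 3) + ε * D = 0 := by push_cast; ring
      rw [h4, zero_smul]
    have hsum0 : ∑ i ∈ S₀, x' i = ∑ i ∈ S₀, x i := by
      rw [hx']
      simp only [Finset.sum_add_distrib, hgsum, add_zero]
    have hmean0 : clusterMean x' c 0 = μ₀ := by
      rw [hμ₀]; unfold clusterMean
      rw [← hS₀def, hsum0]
    have hx'eq : ∀ i, c i = 1 → x' i = x i := by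
      intro i hi
      have hia : i ≠ a := fun h => by rw [h, hca] at hi; exact absurd hi (by decide)
      have hiT : i ∉ T := by
        intro hT
        have := (Finset.mem_filter.mp (Finset.mem_of_mem_erase (hTsub hT))).2
        rw [this] at hi; exact absurd hi (by decide)
      rw [hx', hg]
      simp [hia, hiT]
    have hmean1 : clusterMean x' c 1 = μ₁ := by
      rw [hμ₁]; unfold clusterMean
      congr 1
      exact Finset.sum_congr rfl fun i hi => hx'eq i (Finset.mem_filter.mp hi).2
    set z : Fin 2 → EuclideanSpace ℝ (Fin d) := ![μ₀, μ₁] with hz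
    have hz0 : z 0 = μ₀ := by rw [hz]; rfl
    have hz1 : z 1 = μ₁ := by rw [hz]; rfl
    clear hz
    clear_value z
    have hzmean : ∀ j : Fin 2, clusterMean x' c j = z j := by
      intro j
      fin_cases j
      · exact hmean0.trans hz0.symm
      · exact hmean1.trans hz1.symm
    have hcost_eq : kmeansCost x' c = ∑ i, ‖x' i - z (c i)‖ ^ 2 := by
      unfold kmeansCost
      exact Finset.sum_congr rfl fun i _ => by rw [hzmean (c i)]
    set c' : Fin n → Fin 2 := fun i => if i = a then 1 else c i with hc'
    -- the strict cost comparison at the moved point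
    have hpoint : ‖x' a - μ₁‖ ^ 2 < ‖x' a - μ₀‖ ^ 2 := by
      have key : ‖x' a - μ₀‖ ^ 2 - ‖x' a - μ₁‖ ^ 2
          = 2 * ⟪x' a, μ₁ - μ₀⟫ - (‖μ₁‖ ^ 2 - ‖μ₀‖ ^ 2) := by
        rw [norm_sub_sq_real, norm_sub_sq_real, inner_sub_right]; ring
      have hx'a : x' a = x a + (ε * D) • u := by rw [hx', hg]; simp
      have h1 : ⟪x' a, μ₁ - μ₀⟫ = ⟪x a, μ₁ - μ₀⟫ + (ε * D) * D := by
        rw [hx'a, inner_add_left, real_inner_smul_left, hinner_u]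
      have h2 : ⟪μ₀, μ₁ - μ₀⟫ ≤ ⟪x a, μ₁ - μ₀⟫ := by
        rw [hDu, real_inner_smul_right, real_inner_smul_right, real_inner_comm u μ₀,
          real_inner_comm u (x a)]
        exact mul_le_mul_of_nonneg_left hale hDpos.le
      have h3 : ‖μ₁‖ ^ 2 - ‖μ₀‖ ^ 2 = 2 * ⟪μ₀, μ₁ - μ₀⟫ + D ^ 2 := by
        have e1 : D ^ 2 = ⟪μ₀ - μ₁, μ₀ - μ₁⟫ := by
          rw [real_inner_self_eq_norm_sq, hDdef]
        have e2 : ⟪μ₀, μ₀⟫ = ‖μ₀‖ ^ 2 := real_inner_self_eq_norm_sq μ₀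
        have e3 : ⟪μ₁, μ₁⟫ = ‖μ₁‖ ^ 2 := real_inner_self_eq_norm_sq μ₁
        rw [e1]
        simp only [inner_sub_left, inner_sub_right]
        rw [real_inner_comm μ₁ μ₀] at *
        linarith
      have h4 : 0 < (2 * ε - 1) * D ^ 2 :=
        mul_pos (by linarith) (by positivity)
      nlinarith
    have hstrict : ∑ i, ‖x' i - z (c' i)‖ ^ 2 < ∑ i, ‖x' i - z (c i)‖ ^ 2 := by
      rw [← Finset.sum_erase_add Finset.univ _ (Finset.mem_univ a),
        ← Finset.sum_erase_add Finset.univ (fun i => ‖x' i - z (c i)‖ ^ 2) (Finset.mem_univ a)]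
      have heq : ∑ i ∈ Finset.univ.erase a, ‖x' i - z (c' i)‖ ^ 2
          = ∑ i ∈ Finset.univ.erase a, ‖x' i - z (c i)‖ ^ 2 := by
        refine Finset.sum_congr rfl fun i hi => ?_
        have hci : c' i = c i := by rw [hc']; simp [(Finset.mem_erase.mp hi).1]
        rw [hci]
      rw [heq]
      apply add_lt_add_right
      have hc'a : c' a = 1 := by rw [hc']; simp
      rw [hc'a, hca, hz0, hz1]
      exact hpoint
    have hle := kmeansCost_le_centers x' c' z
    have hopt' := haps x' hmove c'
    rw [hcost_eq] at hopt'
    linarith
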